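/- arXiv:2407.00680 — 3 statements merged into one kernel-verified Lean document; each statement's English description precedes it below -/
import Mathlib

section
/- The complement of the totality problem is not recursively enumerable: the predicate on codes e asserting that φ_e(n) is undefined for some input n is not semidecidable. -/
/-- The complement of the totality problem is not recursively enumerable. -/
theorem totality_problem_complement_not_re :
    ¬ REPred fun e : Nat.Partrec.Code => ∃ n : ℕ, ¬ (e.eval n).Dom := by
  intro h
  apply ComputablePred.halting_problem_not_re 0
  have hg : Computable fun c : Nat.Partrec.Code => c.comp (Nat.Partrec.Code.const 0) :=
    (Nat.Partrec.Code.primrec₂_comp.comp Primrec.id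
      (Primrec.const (Nat.Partrec.Code.const 0))).to_comp
  have h2 : REPred fun c : Nat.Partrec.Code =>
      ∃ n : ℕ, ¬ ((c.comp (Nat.Partrec.Code.const 0)).eval n).Dom := by
    unfold REPred at h ⊢
    exact h.comp hg
  apply h2.of_eq
  intro c
  have key : ∀ n : ℕ, (c.comp (Nat.Partrec.Code.const 0)).eval n = c.eval 0 := by
    intro n
    simp [Nat.Partrec.Code.eval, Nat.Partrec.Code.eval_const, Pure.pure, PFun.pure, Part.bind_some]
    exact Part.bind_some _ _
  constructor
  · rintro ⟨n, hn⟩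
    rwa [key] at hn
  · intro hn
    exact ⟨0, by rwa [key]⟩
end

section
/- The totality problem is not many-one reducible to the halting problem: it is not the case that Tot = {e | ∀ n, φ_e(n) is defined} ≤ₘ K₀ = {(e, x) | φ_e(x) is defined}. -/
open Nat.Partrec Nat.Partrec.Code

/-- The "step-checking" partial function used to reduce the complement of the
diagonal halting problem to totality. -/
private def stepF : ℕ →. ℕ := fun p =>
  cond (evaln p.unpair.2 (Denumerable.ofNat Code p.unpair.1) p.unpair.1).isSome
    Part.none (Part.some 0)

private theorem stepF_partrec : Nat.Partrec stepF := by
  have hb : Computable fun p : ℕ =>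
      (evaln p.unpair.2 (Denumerable.ofNat Code p.unpair.1) p.unpair.1).isSome := by
    have : Primrec fun p : ℕ =>
        ((p.unpair.2, Denumerable.ofNat Code p.unpair.1), p.unpair.1) :=
      ((Primrec.snd.comp .unpair).pair
        ((Primrec.ofNat Code).comp (Primrec.fst.comp .unpair))).pair
        (Primrec.fst.comp .unpair)
    exact (Primrec.option_isSome.comp (primrec_evaln.comp this)).to_comp
  exact Partrec.nat_iff.1 (Partrec.cond hb Partrec.none (Computable.const 0).partrec)

private theorem stepF_dom (m n : ℕ) :
    (stepF (Nat.pair m n)).Dom ↔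
      evaln n (Denumerable.ofNat Code m) m = Option.none := by
  simp only [stepF, Nat.unpair_pair]
  cases h : (evaln n (Denumerable.ofNat Code m) m) <;> simp [h]

/-- The totality problem is not many-one reducible to the halting problem. -/
theorem totality_not_manyOneReducible_halting :
    ¬ (fun e : Nat.Partrec.Code => ∀ n : ℕ, (e.eval n).Dom) ≤₀
      (fun p : Nat.Partrec.Code × ℕ => (p.1.eval p.2).Dom) := by
  rintro ⟨f, fcomp, hf⟩
  obtain ⟨c, hc⟩ := exists_code.1 stepF_partrec
  -- h n halts iff (c.curry n) is total iff the diagonal computation on n diverges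
  set h : ℕ →. ℕ := fun n => ((f (c.curry n)).1).eval ((f (c.curry n)).2) with hdef
  have hcur : Computable fun n : ℕ => f (c.curry n) :=
    fcomp.comp ((primrec₂_curry.comp (Primrec.const c) Primrec.id).to_comp)
  have hpart : Nat.Partrec h :=
    Partrec.nat_iff.1
      (eval_part.comp (Computable.fst.comp hcur) (Computable.snd.comp hcur))
  obtain ⟨d, hd⟩ := exists_code.1 hpart
  set n₀ : ℕ := Encodable.encode d with hn₀
  have key : (d.eval n₀).Dom ↔ ∀ n : ℕ, evaln n d n₀ = Option.none := by
    have h1 : (d.eval n₀).Dom ↔ (h n₀).Dom := by rw [hd]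
    have h2 : (h n₀).Dom ↔ ∀ n : ℕ, ((c.curry n₀).eval n).Dom := by
      simpa [hdef] using (hf (c.curry n₀)).symm
    have h3 : ∀ n : ℕ, ((c.curry n₀).eval n).Dom ↔ evaln n d n₀ = Option.none := by
      intro n
      rw [eval_curry, hc]
      simpa [hn₀] using stepF_dom n₀ n
    rw [h1, h2]
    exact forall_congr' h3
  have hdiverge : ¬ (d.eval n₀).Dom ↔ ∀ n : ℕ, evaln n d n₀ = Option.none := by
    constructor
    · intro hnd n
      cases hx : evaln n d n₀ with
      | none => rfl
      | some x => exact absurd (Part.dom_iff_mem.2 ⟨x, evaln_complete.2 ⟨n, hx⟩⟩) hnd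
    · intro hall hdom
      obtain ⟨x, hx⟩ := Part.dom_iff_mem.1 hdom
      obtain ⟨k, hk⟩ := evaln_complete.1 hx
      rw [hall k] at hk
      exact Option.not_mem_none x hk
  exact iff_not_self (key.trans hdiverge.symm)
end

section
/- Addition of computable real numbers is not uniformly computable on binary digit representations: there is no total computable function g : ℕ → ℕ such that for all codes a and b which are total with all outputs in {0, 1} and which satisfy val(a) + val(b) < 1, the code (with number) g(⟨a, b⟩) is total with all outputs in {0, 1} and val(g(⟨a, b⟩)) = val(a) + val(b). Here val(e) denotes the real number Σₙ φ_e(n) / 2^(n+1). -/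
open scoped Classical

/-- A code `e` is total with all outputs in `{0, 1}`: for every `n`, `φ_e(n)` is defined and
equals `0` or `1`; such a code represents a binary digit expansion. -/
def Total01 (e : Nat.Partrec.Code) : Prop :=
  ∀ n : ℕ, ∃ b : ℕ, b ∈ e.eval n ∧ (b = 0 ∨ b = 1)

/-- The real number `val(e) = Σₙ φ_e(n) / 2^(n+1)` represented by a code `e`
(reading the outputs of `e` as binary digits). -/
noncomputable def codeVal (e : Nat.Partrec.Code) : ℝ :=
  ∑' n : ℕ, (((e.eval n).toOption.getD 0 : ℕ) : ℝ) / 2 ^ (n + 1)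

/-! ### Auxiliary digit functions -/

/-- digits of 1/3 -/
def aDig (n : ℕ) : ℕ := if n % 2 = 1 then 1 else 0

/-- digits of 1/6 -/
def bDig (n : ℕ) : ℕ := if 2 ≤ n ∧ n % 2 = 0 then 1 else 0

/-- The diagonal digit function: follow the digits of `1/6` until the code `c` is seen
(in the sense of `evaln`) to output its first digit; from then on output the digit that
pushes the sum `1/3 + val(b)` to the opposite side of `1/2`. -/
def diagDig (c : Nat.Partrec.Code) (n : ℕ) : ℕ :=
  if n < 3 then bDig n
  else ((Nat.Partrec.Code.evaln (n+1) c 0).map (fun d => if d = 0 then 1 else 0)).getD (bDig n)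

lemma aDig_le (n : ℕ) : aDig n ≤ 1 := by unfold aDig; split <;> simp
lemma bDig_le (n : ℕ) : bDig n ≤ 1 := by unfold bDig; split <;> simp

lemma diagDig_le (c : Nat.Partrec.Code) (n : ℕ) : diagDig c n ≤ 1 := by
  unfold diagDig
  rcases h : Nat.Partrec.Code.evaln (n+1) c 0 with _ | d <;>
    split <;> simp [h, bDig_le] <;> split <;> simp [bDig_le]

/-! ### Computability facts -/

lemma primrec_aDig : Primrec aDig := by
  unfold aDig
  exact Primrec.ite
    (PrimrecRel.comp Primrec.eq (Primrec.nat_mod.comp Primrec.id (Primrec.const 2))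
      (Primrec.const 1))
    (Primrec.const 1) (Primrec.const 0)

lemma primrec_bDig : Primrec bDig := by
  unfold bDig
  exact Primrec.ite
    ((PrimrecRel.comp Primrec.nat_le (Primrec.const 2) Primrec.id).and
      (PrimrecRel.comp Primrec.eq (Primrec.nat_mod.comp Primrec.id (Primrec.const 2))
        (Primrec.const 0)))
    (Primrec.const 1) (Primrec.const 0)

lemma primrec_diagDig : Primrec₂ diagDig := by
  have hev : Primrec fun p : Nat.Partrec.Code × ℕ =>
      Nat.Partrec.Code.evaln (p.2 + 1) p.1 0 :=
    Nat.Partrec.Code.primrec_evaln.comp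
      (((Primrec.succ.comp Primrec.snd).pair Primrec.fst).pair (Primrec.const 0))
  have hin : Primrec₂ fun (_ : Nat.Partrec.Code × ℕ) (d : ℕ) => if d = 0 then 1 else 0 :=
    (Primrec.ite (PrimrecRel.comp Primrec.eq Primrec.id (Primrec.const 0))
      (Primrec.const 1) (Primrec.const 0)).comp Primrec.snd
  have hmain : Primrec fun p : Nat.Partrec.Code × ℕ =>
      ((Nat.Partrec.Code.evaln (p.2 + 1) p.1 0).map (fun d => if d = 0 then 1 else 0)).getD
        (bDig p.2) :=
    Primrec.option_getD.comp (Primrec.option_map hev hin) (primrec_bDig.comp Primrec.snd)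
  exact Primrec.ite (PrimrecRel.comp Primrec.nat_lt Primrec.snd (Primrec.const 3))
    (primrec_bDig.comp Primrec.snd) hmain

/-! ### Summability and values of the digit series -/

lemma summable_one_div : Summable (fun n : ℕ => (1:ℝ)/2^(n+1)) := by
  have := (summable_geometric_of_lt_one (r := (1:ℝ)/2) (by norm_num) (by norm_num)).mul_left ((1:ℝ)/2)
  refine this.congr fun n => ?_
  rw [div_pow, one_pow, pow_succ, div_mul_div_comm, one_mul, mul_comm]

lemma dsummable (d : ℕ → ℕ) (hd : ∀ n, d n ≤ 1) :
    Summable (fun n : ℕ => (d n : ℝ)/2^(n+1)) := by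
  refine Summable.of_nonneg_of_le (fun n => by positivity) (fun n => ?_) summable_one_div
  have : (d n : ℝ) ≤ 1 := by exact_mod_cast hd n
  gcongr

lemma sum_one_from (N : ℕ) : ∑' n : ℕ, (1:ℝ)/2^(n+N+1) = 1/2^N := by
  have h : ∀ n : ℕ, (1:ℝ)/2^(n+N+1) = (1/2^(N+1)) * (1/2)^n := by
    intro n
    rw [div_pow, one_pow, show n + N + 1 = (N+1) + n by ring, pow_add]
    rw [div_mul_div_comm, one_mul]
  rw [tsum_congr h, tsum_mul_left, tsum_geometric_two, pow_succ]
  rw [one_div, mul_inv, inv_mul_cancel_right₀ (by norm_num : (2:ℝ) ≠ 0)]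
  rw [one_div]

lemma summable_shift (d : ℕ → ℕ) (hd : ∀ n, d n ≤ 1) (N : ℕ) :
    Summable (fun n : ℕ => (d (n + N) : ℝ)/2^(n+N+1)) := by
  have := (summable_nat_add_iff (f := fun n => (d n : ℝ)/2^(n+1)) N).2 (dsummable d hd)
  exact this

lemma summable_shift_one (N : ℕ) :
    Summable (fun n : ℕ => (1 : ℝ)/2^(n+N+1)) := by
  have := (summable_nat_add_iff (f := fun n => (1 : ℝ)/2^(n+1)) N).2 summable_one_div
  exact this

lemma tsum_quarter : ∑' k : ℕ, ((1:ℝ)/4)^k = 4/3 := by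
  rw [tsum_geometric_of_lt_one (by norm_num) (by norm_num)]; norm_num

lemma pow_two_mul (k : ℕ) : ((1:ℝ)/2^(2*k)) = (1/4)^k := by
  rw [pow_mul, div_pow, one_pow]; norm_num

lemma val_a : ∑' n : ℕ, (aDig n : ℝ)/2^(n+1) = 1/3 := by
  have hev : ∀ k : ℕ, (aDig (2*k) : ℝ)/2^(2*k+1) = 0 := by
    intro k
    have : aDig (2*k) = 0 := by unfold aDig; split <;> omega
    rw [this]; norm_num
  have hod : ∀ k : ℕ, (aDig (2*k+1) : ℝ)/2^(2*k+1+1) = (1/4) * (1/4)^k := by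
    intro k
    have h1 : aDig (2*k+1) = 1 := by unfold aDig; split <;> omega
    rw [h1, Nat.cast_one, show 2*k+1+1 = 2*(k+1) by ring, pow_two_mul, pow_succ, mul_comm]
  have h1 : Summable fun k : ℕ => (aDig (2*k) : ℝ)/2^(2*k+1) :=
    Summable.congr summable_zero fun k => (hev k).symm
  have h2 : Summable fun k : ℕ => (aDig (2*k+1) : ℝ)/2^(2*k+1+1) :=
    Summable.congr (((summable_geometric_of_lt_one (r := (1:ℝ)/4) (by norm_num)
      (by norm_num)).mul_left (1/4))) fun k => (hod k).symm
  rw [← tsum_even_add_odd (f := fun n => (aDig n : ℝ)/2^(n+1)) h1 h2,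
    tsum_congr hev, tsum_congr hod, tsum_zero, tsum_mul_left, tsum_quarter]
  norm_num

lemma val_b : ∑' n : ℕ, (bDig n : ℝ)/2^(n+1) = 1/6 := by
  have hod : ∀ k : ℕ, (bDig (2*k+1) : ℝ)/2^(2*k+1+1) = 0 := by
    intro k
    have : bDig (2*k+1) = 0 := by unfold bDig; split <;> omega
    rw [this]; norm_num
  have hev : ∀ k : ℕ, (bDig (2*(k+1)) : ℝ)/2^(2*(k+1)+1) = (1/8) * (1/4)^k := by
    intro k
    have h1 : bDig (2*(k+1)) = 1 := by unfold bDig; split <;> omega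
    rw [h1, Nat.cast_one, show 2*(k+1)+1 = 3 + 2*k by ring, pow_add,
      show ((1:ℝ)/(2^3 * 2^(2*k))) = (1/2^3) * (1/2^(2*k)) by rw [div_mul_div_comm, one_mul],
      pow_two_mul]
    norm_num
  have h2 : Summable fun k : ℕ => (bDig (2*k+1) : ℝ)/2^(2*k+1+1) :=
    Summable.congr summable_zero fun k => (hod k).symm
  have h1 : Summable fun k : ℕ => (bDig (2*k) : ℝ)/2^(2*k+1) := by
    refine Summable.of_nonneg_of_le (fun n => by positivity) (fun k => ?_)
      ((summable_geometric_of_lt_one (r := (1:ℝ)/4) (by norm_num) (by norm_num)).mul_left (1/2))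
    have hb : (bDig (2*k) : ℝ) ≤ 1 := by exact_mod_cast bDig_le _
    have hle : (bDig (2*k) : ℝ)/2^(2*k+1) ≤ 1/2^(2*k+1) := by gcongr
    refine hle.trans (le_of_eq ?_)
    rw [pow_succ, show ((1:ℝ)/(2^(2*k) * 2)) = (1/2^(2*k)) * (1/2) by
      rw [div_mul_div_comm, one_mul], pow_two_mul, mul_comm]
  rw [← tsum_even_add_odd (f := fun n => (bDig n : ℝ)/2^(n+1)) h1 h2,
    tsum_congr hod, tsum_zero, add_zero]
  rw [Summable.tsum_eq_zero_add h1]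
  have h0 : (bDig (2*0) : ℝ)/2^(2*0+1) = 0 := by
    have : bDig (2*0) = 0 := by unfold bDig; split <;> omega
    rw [this]; norm_num
  rw [h0, zero_add, tsum_congr (fun k => hev k), tsum_mul_left, tsum_quarter]
  norm_num

lemma codeVal_eq (e : Nat.Partrec.Code) (D : ℕ → ℕ) (h : ∀ n, e.eval n = Part.some (D n)) :
    codeVal e = ∑' n : ℕ, (D n : ℝ)/2^(n+1) := by
  unfold codeVal
  refine tsum_congr fun n => ?_
  rw [h n]
  simp [Part.toOption]

/-! ### The main theorem -/

/-- Addition of computable real numbers is not uniformly computable on binary digit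
representations: there is no total computable `g : ℕ → ℕ` which, given (the numbers of) codes
`a`, `b` of binary digit expansions with `val(a) + val(b) < 1`, returns the number of a code of
a binary digit expansion of `val(a) + val(b)`. -/
theorem addition_not_uniformly_computable :
    ¬ ∃ g : ℕ → ℕ, Computable g ∧
      ∀ a b : Nat.Partrec.Code, Total01 a → Total01 b → codeVal a + codeVal b < 1 →
        Total01 (Denumerable.ofNat Nat.Partrec.Code
            (g (Nat.pair (Encodable.encode a) (Encodable.encode b)))) ∧
          codeVal (Denumerable.ofNat Nat.Partrec.Code
            (g (Nat.pair (Encodable.encode a) (Encodable.encode b)))) =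
            codeVal a + codeVal b := by
  rintro ⟨g, hg, H⟩
  -- a code `ca` for the digits of 1/3
  have pa : Nat.Partrec (↑aDig : ℕ →. ℕ) := Partrec.nat_iff.1 primrec_aDig.to_comp.partrec
  obtain ⟨ca, hca⟩ := Nat.Partrec.Code.exists_code.1 pa
  have hcaev : ∀ n, ca.eval n = Part.some (aDig n) := fun n => by rw [hca]; rfl
  -- the diagonal code `b`, via the recursion theorem
  have hc1 : Computable fun b : Nat.Partrec.Code =>
      Denumerable.ofNat Nat.Partrec.Code
        (g (Nat.pair (Encodable.encode ca) (Encodable.encode b))) :=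
    (Computable.ofNat _).comp (hg.comp (Primrec₂.natPair.to_comp.comp
      (Computable.const _) Computable.encode))
  have hF : Computable₂ fun (b : Nat.Partrec.Code) (n : ℕ) =>
      diagDig (Denumerable.ofNat Nat.Partrec.Code
        (g (Nat.pair (Encodable.encode ca) (Encodable.encode b)))) n :=
    Computable₂.comp primrec_diagDig.to_comp (hc1.comp Computable.fst) Computable.snd
  obtain ⟨b, hb⟩ := Nat.Partrec.Code.fixed_point₂ hF.partrec₂
  have hbev : ∀ n, b.eval n = Part.some (diagDig (Denumerable.ofNat Nat.Partrec.Code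
      (g (Nat.pair (Encodable.encode ca) (Encodable.encode b)))) n) := fun n => by rw [hb]; rfl
  set c : Nat.Partrec.Code := Denumerable.ofNat Nat.Partrec.Code
      (g (Nat.pair (Encodable.encode ca) (Encodable.encode b))) with hc
  -- basic facts
  have hcaval : codeVal ca = 1/3 := (codeVal_eq ca aDig hcaev).trans val_a
  have hbval : codeVal b = ∑' n : ℕ, (diagDig c n : ℝ)/2^(n+1) := codeVal_eq b _ hbev
  have hTa : Total01 ca := fun n =>
    ⟨aDig n, by rw [hcaev n]; exact Part.mem_some _, by have := aDig_le n; omega⟩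
  have hTb : Total01 b := fun n =>
    ⟨diagDig c n, by rw [hbev n]; exact Part.mem_some _, by have := diagDig_le c n; omega⟩
  have hsumb : Summable (fun n : ℕ => (diagDig c n : ℝ)/2^(n+1)) := dsummable _ (diagDig_le c)
  -- `codeVal b ≤ 1/4` since the first two digits are 0
  have hb14 : codeVal b ≤ 1/4 := by
    rw [hbval, ← Summable.sum_add_tsum_nat_add 2 hsumb]
    have hd0 : diagDig c 0 = 0 := by
      unfold diagDig
      rw [if_pos (by norm_num)]
      unfold bDig; split <;> omega
    have hd1 : diagDig c 1 = 0 := by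
      unfold diagDig
      rw [if_pos (by norm_num)]
      unfold bDig; split <;> omega
    have e0 : ∑ i ∈ Finset.range 2, (diagDig c i : ℝ)/2^(i+1) = 0 := by
      rw [Finset.sum_range_succ, Finset.sum_range_one, hd0, hd1]
      norm_num
    have e1 : ∑' n : ℕ, (diagDig c (n+2) : ℝ)/2^(n+2+1) ≤ 1/2^2 := by
      rw [← sum_one_from 2]
      refine Summable.tsum_le_tsum (fun n => ?_) (summable_shift _ (diagDig_le c) 2)
        (summable_shift_one 2)
      have : (diagDig c (n+2) : ℝ) ≤ 1 := by exact_mod_cast diagDig_le c (n+2)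
      gcongr
    rw [e0, zero_add]
    calc ∑' n : ℕ, (diagDig c (n+2) : ℝ)/2^(n+2+1) ≤ 1/2^2 := e1
      _ = 1/4 := by norm_num
  have hlt1 : codeVal ca + codeVal b < 1 := by rw [hcaval]; linarith
  have hH := H ca b hTa hTb hlt1
  rw [← hc] at hH
  obtain ⟨hTc, hceq⟩ := hH
  -- the first digit of the sum code
  obtain ⟨d, hd, hd01⟩ := hTc 0
  obtain ⟨s, hs⟩ := Nat.Partrec.Code.evaln_complete.1 hd
  have hex : ∃ n, 3 ≤ n ∧ d ∈ Nat.Partrec.Code.evaln (n+1) c 0 :=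
    ⟨max 3 s, le_max_left _ _,
      Nat.Partrec.Code.evaln_mono ((le_max_right 3 s).trans (Nat.le_succ _)) hs⟩
  set N := Nat.find hex with hNdef
  obtain ⟨hN3, hNev⟩ := Nat.find_spec hex
  -- description of the digits of b
  have hdig : ∀ n, diagDig c n = if n < N then bDig n else (if d = 0 then 1 else 0) := by
    intro n
    unfold diagDig
    by_cases h3 : n < 3
    · rw [if_pos h3, if_pos (lt_of_lt_of_le h3 hN3)]
    · rw [if_neg h3]
      by_cases hn : n < N
      · rcases h' : Nat.Partrec.Code.evaln (n+1) c 0 with _ | d'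
        · rw [if_pos hn]; simp
        · exfalso
          have hm : d' ∈ Nat.Partrec.Code.evaln (n+1) c 0 := by rw [h']; rfl
          have hdd : d' = d := Part.mem_unique (Nat.Partrec.Code.evaln_sound hm) hd
          exact Nat.find_min hex hn ⟨by omega, by rw [← hdd]; exact hm⟩
      · have hm : d ∈ Nat.Partrec.Code.evaln (n+1) c 0 :=
          Nat.Partrec.Code.evaln_mono (by omega) hNev
        rw [Option.mem_def] at hm
        rw [hm, if_neg hn]
        simp
  -- split the value of b at N
  set ε : ℝ := ∑' n : ℕ, (bDig (n+N) : ℝ)/2^(n+N+1) with hε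
  have hsplit6 : ∑ i ∈ Finset.range N, (bDig i:ℝ)/2^(i+1) + ε = 1/6 := by
    have h := Summable.sum_add_tsum_nat_add (f := fun n => (bDig n:ℝ)/2^(n+1)) N (dsummable bDig bDig_le)
    rw [val_b] at h
    exact h
  have hεpos : 0 < ε := by
    rw [hε]
    refine Summable.tsum_pos (summable_shift bDig bDig_le N) (fun i => by positivity) (N+2) ?_
    have hb1 : bDig (N+2+N) = 1 := by unfold bDig; split <;> omega
    rw [hb1]
    positivity
  have hεlt : ε < 1/2^N := by
    have h1 : ε < ∑' n : ℕ, (1:ℝ)/2^(n+N+1) := by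
      rw [hε]
      refine Summable.tsum_lt_tsum (i := N+1) (fun i => ?_) ?_
        (summable_shift bDig bDig_le N) (summable_shift_one N)
      · have : (bDig (i+N):ℝ) ≤ 1 := by exact_mod_cast bDig_le _
        gcongr
      · have hb0 : bDig (N+1+N) = 0 := by unfold bDig; split <;> omega
        rw [hb0]
        simp only [Nat.cast_zero, zero_div]
        positivity
    rwa [sum_one_from N] at h1
  -- the value of b
  have hvb' : codeVal b = ∑ i ∈ Finset.range N, (bDig i:ℝ)/2^(i+1)
      + ∑' n : ℕ, (((if d = 0 then 1 else 0 : ℕ)):ℝ)/2^(n+N+1) := by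
    rw [hbval, ← Summable.sum_add_tsum_nat_add N hsumb]
    congr 1
    · exact Finset.sum_congr rfl fun i hi => by
        rw [hdig i, if_pos (Finset.mem_range.1 hi)]
    · exact tsum_congr fun n => by rw [hdig (n+N), if_neg (by omega)]
  -- digits of the sum code c
  set dc : ℕ → ℕ := fun n => ((c.eval n).toOption.getD 0) with hdc
  have hdcle : ∀ n, dc n ≤ 1 := by
    intro n
    obtain ⟨v, hv, hv01⟩ := hTc n
    have hev : c.eval n = Part.some v := Part.eq_some_iff.2 hv
    rw [hdc]
    simp only [hev, Part.toOption]
    simp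
    omega
  have hdc0 : dc 0 = d := by
    have hev : c.eval 0 = Part.some d := Part.eq_some_iff.2 hd
    rw [hdc]
    simp only [hev, Part.toOption]
    simp
  have hsumc : Summable (fun n : ℕ => (dc n : ℝ)/2^(n+1)) := dsummable dc hdcle
  have hcval : codeVal c = ∑' n : ℕ, (dc n : ℝ)/2^(n+1) := rfl
  rcases hd01 with h0 | h1
  · -- d = 0 : the sum code claims `sum ≤ 1/2`, but we force `sum > 1/2`.
    subst h0
    have hvb : codeVal b = (1/6 - ε) + 1/2^N := by
      rw [hvb']
      have : ∀ n : ℕ, (((if (0:ℕ) = 0 then 1 else 0 : ℕ)):ℝ)/2^(n+N+1) = (1:ℝ)/2^(n+N+1) := by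
        intro n; norm_num
      rw [tsum_congr this, sum_one_from N]
      linarith [hsplit6]
    -- codeVal c ≤ 1/2
    have hcle : codeVal c ≤ 1/2 := by
      rw [hcval, ← Summable.sum_add_tsum_nat_add 1 hsumc]
      have e0 : ∑ i ∈ Finset.range 1, (dc i : ℝ)/2^(i+1) = 0 := by
        rw [Finset.sum_range_one, hdc0]
        norm_num
      have e1 : ∑' n : ℕ, (dc (n+1) : ℝ)/2^(n+1+1) ≤ 1/2^1 := by
        rw [← sum_one_from 1]
        refine Summable.tsum_le_tsum (fun n => ?_) (summable_shift dc hdcle 1) (summable_shift_one 1)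
        have : (dc (n+1) : ℝ) ≤ 1 := by exact_mod_cast hdcle (n+1)
        gcongr
      rw [e0, zero_add]
      calc ∑' n : ℕ, (dc (n+1) : ℝ)/2^(n+1+1) ≤ 1/2^1 := e1
        _ = 1/2 := by norm_num
    rw [hceq, hcaval, hvb] at hcle
    linarith
  · -- d = 1 : the sum code claims `sum ≥ 1/2`, but we force `sum < 1/2`.
    subst h1
    have hvb : codeVal b = 1/6 - ε := by
      rw [hvb']
      have : ∀ n : ℕ, (((if (1:ℕ) = 0 then 1 else 0 : ℕ)):ℝ)/2^(n+N+1) = 0 := by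
        intro n; norm_num
      rw [tsum_congr this, tsum_zero]
      linarith [hsplit6]
    have hcge : (1:ℝ)/2 ≤ codeVal c := by
      have h := Summable.le_tsum hsumc 0 (fun j _ => by positivity)
      rw [hdc0] at h
      rw [hcval]
      calc (1:ℝ)/2 = ((1:ℕ):ℝ)/2^(0+1) := by norm_num
        _ ≤ _ := h
    rw [hceq, hcaval, hvb] at hcge
    linarith
end
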